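/- Let P₀ be a symmetric n×n real matrix and R a symmetric m×m real matrix, and let H₀ be an m×n real matrix such that H₀ P₀ H₀ᵀ + R is invertible. Then the map H ↦ P_p(H) = P₀ − P₀ Hᵀ (H P₀ Hᵀ + R)⁻¹ H P₀ is differentiable at H₀, and for every m×n matrix K its Fréchet derivative is DP_p(H₀)[K] = −P₀ [Kᵀ Σ H₀ + H₀ᵀ Σ K − H₀ᵀ Σ (K P₀ H₀ᵀ + H₀ P₀ Kᵀ) Σ H₀] P₀, where Σ = (H₀ P₀ H₀ᵀ + R)⁻¹. -/

import Mathlib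

open Matrix

section helpers

attribute [local instance]
  Matrix.frobeniusNormedAddCommGroup Matrix.frobeniusIsBoundedSMul Matrix.frobeniusNormedSpace

variable {a b c : Type*} [Fintype a] [Fintype b] [Fintype c]

theorem matMulBB : IsBoundedBilinearMap ℝ
    (fun p : Matrix a b ℝ × Matrix b c ℝ => p.1 * p.2) where
  add_left x₁ x₂ y := Matrix.add_mul x₁ x₂ y
  smul_left r x y := Matrix.smul_mul r x y
  add_right x y₁ y₂ := Matrix.mul_add x y₁ y₂
  smul_right r x y := Matrix.mul_smul x r y
  bound := ⟨1, one_pos, fun x y => by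
    simpa using Matrix.frobenius_norm_mul x y⟩

theorem HasFDerivAt.matmul {X : Type*} [NormedAddCommGroup X] [NormedSpace ℝ X]
    {F : X → Matrix a b ℝ} {G : X → Matrix b c ℝ}
    {F' : X →L[ℝ] Matrix a b ℝ} {G' : X →L[ℝ] Matrix b c ℝ} {x : X}
    (hF : HasFDerivAt F F' x) (hG : HasFDerivAt G G' x) :
    HasFDerivAt (fun y => F y * G y)
      (((matMulBB (a := a) (b := b) (c := c)).deriv (F x, G x)).comp (F'.prod G')) x := by
  have h := (matMulBB (a := a) (b := b) (c := c)).hasFDerivAt (F x, G x)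
  exact h.comp x (HasFDerivAt.prodMk hF hG)

/-- transpose as a continuous linear map -/
noncomputable def transCLM (a b : Type*) [Fintype a] [Fintype b] :
    Matrix a b ℝ →L[ℝ] Matrix b a ℝ :=
  LinearMap.toContinuousLinearMap
    (Matrix.transposeLinearEquiv a b ℝ ℝ).toLinearMap

@[simp] theorem transCLM_apply (A : Matrix a b ℝ) : transCLM a b A = Aᵀ := rfl

end helpers

-- Equip matrices with the Frobenius norm (any equivalent norm gives the same derivative).
attribute [local instance]
  Matrix.frobeniusSeminormedAddCommGroup Matrix.frobeniusNormedAddCommGroup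
  Matrix.frobeniusIsBoundedSMul Matrix.frobeniusNormedSpace

attribute [local instance] Matrix.frobeniusNormedRing Matrix.frobeniusNormedAlgebra

set_option maxHeartbeats 1000000

/-- Fréchet derivative of the a posteriori covariance map
`P_p(H) = P₀ − P₀ Hᵀ (H P₀ Hᵀ + R)⁻¹ H P₀` at a point `H₀` where `H₀ P₀ H₀ᵀ + R` is
invertible: for every direction `K`,
`DP_p(H₀)[K] = −P₀ [Kᵀ Σ H₀ + H₀ᵀ Σ K − H₀ᵀ Σ (K P₀ H₀ᵀ + H₀ P₀ Kᵀ) Σ H₀] P₀`,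
where `Σ = (H₀ P₀ H₀ᵀ + R)⁻¹`. -/
theorem stmt_11 {m n : ℕ}
    (P₀ : Matrix (Fin n) (Fin n) ℝ) (R : Matrix (Fin m) (Fin m) ℝ)
    (H₀ : Matrix (Fin m) (Fin n) ℝ)
    (hP₀ : P₀.IsSymm) (hR : R.IsSymm) (hinv : IsUnit (H₀ * P₀ * H₀ᵀ + R))
    (Pp : Matrix (Fin m) (Fin n) ℝ → Matrix (Fin n) (Fin n) ℝ)
    (hPp : Pp = fun H => P₀ - P₀ * Hᵀ * (H * P₀ * Hᵀ + R)⁻¹ * H * P₀)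
    (Sig : Matrix (Fin m) (Fin m) ℝ) (hSig : Sig = (H₀ * P₀ * H₀ᵀ + R)⁻¹) :
    ∃ L : Matrix (Fin m) (Fin n) ℝ →L[ℝ] Matrix (Fin n) (Fin n) ℝ,
      HasFDerivAt Pp L H₀ ∧
      ∀ K : Matrix (Fin m) (Fin n) ℝ,
        L K = -(P₀ * (Kᵀ * Sig * H₀ + H₀ᵀ * Sig * K -
          H₀ᵀ * Sig * (K * P₀ * H₀ᵀ + H₀ * P₀ * Kᵀ) * Sig * H₀) * P₀) := by
  subst hSig
  have hPp' : Pp = fun H => P₀ - P₀ * Hᵀ * Ring.inverse (H * P₀ * Hᵀ + R) * H * P₀ := by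
    rw [hPp]; funext H; rw [Matrix.nonsing_inv_eq_ringInverse]
  subst hPp'
  set u := hinv.unit with hu
  have huspec : (u : Matrix (Fin m) (Fin m) ℝ) = H₀ * P₀ * H₀ᵀ + R := hinv.unit_spec
  have ht : HasFDerivAt (fun H : Matrix (Fin m) (Fin n) ℝ => Hᵀ)
      (transCLM (Fin m) (Fin n)) H₀ := (transCLM (Fin m) (Fin n)).hasFDerivAt
  have h1 := HasFDerivAt.matmul (@hasFDerivAt_const ℝ _ _ _ _ PseudoMetricSpace.toUniformSpace.toTopologicalSpace
    _ _ _ PseudoMetricSpace.toUniformSpace.toTopologicalSpace P₀ H₀) ht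
  have h2 := HasFDerivAt.matmul (hasFDerivAt_id H₀) (@hasFDerivAt_const ℝ _ _ _ _ PseudoMetricSpace.toUniformSpace.toTopologicalSpace
    _ _ _ PseudoMetricSpace.toUniformSpace.toTopologicalSpace P₀ H₀)
  have h3 := h2.matmul ht
  have h4 := h3.add_const R
  have hg : HasFDerivAt (Ring.inverse : Matrix (Fin m) (Fin m) ℝ → Matrix (Fin m) (Fin m) ℝ)
      (-(ContinuousLinearMap.mulLeftRight ℝ _ (↑u⁻¹) (↑u⁻¹))) (H₀ * P₀ * H₀ᵀ + R) := by
    rw [show H₀ * P₀ * H₀ᵀ + R = (u : Matrix (Fin m) (Fin m) ℝ) from huspec.symm]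
    exact hasFDerivAt_ringInverse (𝕜 := ℝ) u
  have h5 := hg.comp H₀ h4
  have h6 := h1.matmul h5
  have h7 := h6.matmul (hasFDerivAt_id H₀)
  have h8 := h7.matmul (@hasFDerivAt_const ℝ _ _ _ _ PseudoMetricSpace.toUniformSpace.toTopologicalSpace
    _ _ _ PseudoMetricSpace.toUniformSpace.toTopologicalSpace P₀ H₀)
  have h9 := HasFDerivAt.sub (@hasFDerivAt_const ℝ _ _ _ _ PseudoMetricSpace.toUniformSpace.toTopologicalSpace
    _ _ _ PseudoMetricSpace.toUniformSpace.toTopologicalSpace P₀ H₀) h8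
  refine ⟨_, h9, fun K => ?_⟩
  have hinvu : ((u⁻¹ : (Matrix (Fin m) (Fin m) ℝ)ˣ) : Matrix (Fin m) (Fin m) ℝ)
      = (H₀ * P₀ * H₀ᵀ + R)⁻¹ := by
    rw [Matrix.coe_units_inv, huspec]
  have hru : Ring.inverse (H₀ * P₀ * H₀ᵀ + R) = (H₀ * P₀ * H₀ᵀ + R)⁻¹ :=
    (Matrix.nonsing_inv_eq_ringInverse _).symm
  set_option maxRecDepth 100000 in
  change (0 : Matrix (Fin n) (Fin n) ℝ) - ((P₀ * H₀ᵀ * Ring.inverse (H₀ * P₀ * H₀ᵀ + R) * H₀) * (0 : Matrix (Fin n) (Fin n) ℝ)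
    + ((P₀ * H₀ᵀ * Ring.inverse (H₀ * P₀ * H₀ᵀ + R)) * K
    + ((P₀ * H₀ᵀ) * -(((u⁻¹ : (Matrix (Fin m) (Fin m) ℝ)ˣ) : Matrix (Fin m) (Fin m) ℝ)
        * ((H₀ * P₀) * Kᵀ + (H₀ * (0 : Matrix (Fin n) (Fin n) ℝ) + K * P₀) * H₀ᵀ)
        * ((u⁻¹ : (Matrix (Fin m) (Fin m) ℝ)ˣ) : Matrix (Fin m) (Fin m) ℝ))
      + (P₀ * Kᵀ + (0 : Matrix (Fin n) (Fin n) ℝ) * H₀ᵀ) * Ring.inverse (H₀ * P₀ * H₀ᵀ + R)) * H₀) * P₀) = _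
  simp only [ContinuousLinearMap.comp_apply, ContinuousLinearMap.prod_apply,
    IsBoundedBilinearMap.deriv_apply, ContinuousLinearMap.coe_sub', Pi.sub_apply,
    ContinuousLinearMap.neg_apply, ContinuousLinearMap.mulLeftRight_apply,
    ContinuousLinearMap.add_apply, transCLM_apply, ContinuousLinearMap.coe_id', id_eq,
    hasFDerivAt_const, ContinuousLinearMap.zero_apply, zero_mul, mul_zero, add_zero,
    zero_add, zero_sub, Function.comp_apply, hinvu, hru]
  set S := (H₀ * P₀ * H₀ᵀ + R)⁻¹
  simp only [Matrix.mul_add, Matrix.add_mul, Matrix.mul_sub, Matrix.sub_mul,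
    Matrix.neg_mul, Matrix.mul_neg, Matrix.zero_mul, Matrix.mul_zero, zero_mul, mul_zero,
    zero_add, add_zero, Matrix.mul_assoc]
  abel
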